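/- arXiv:1904.00827 — 5 statements merged into one kernel-verified Lean document; each statement's English description precedes it below -/
import Mathlib

section
/- The category of small ucwfs and strict ucwf-morphisms has an initial object, which can be constructed concretely as follows: the base category N has natural numbers as objects with N(n,m) = n^m (m-tuples of elements of {1,...,n}), composition given by reindexing; Tm(n) = {1,...,n} with i[(a_1,...,a_m)] = a_i; s(n) = n+1; p_n = (1,...,n); q_n = n+1. This structure is an initial object in the category of ucwfs. -/
open CategoryTheory Opposite

/-- A unityped category with families (ucwf): a category `C` with a terminal
object (the empty context), a presheaf of terms, and context comprehension. -/
structure Ucwf where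
  C : Type
  [cat : Category C]
  empty : C
  emptySub : ∀ Γ : C, Γ ⟶ empty
  empty_unique : ∀ {Γ : C} (f : Γ ⟶ empty), f = emptySub Γ
  Tm : Cᵒᵖ ⥤ Type
  s : C → C
  p : ∀ n : C, s n ⟶ n
  q : ∀ n : C, Tm.obj (op (s n))
  pair : ∀ {m n : C}, (m ⟶ n) → Tm.obj (op m) → (m ⟶ s n)
  pair_p : ∀ {m n : C} (γ : m ⟶ n) (a : Tm.obj (op m)), pair γ a ≫ p n = γ
  pair_q : ∀ {m n : C} (γ : m ⟶ n) (a : Tm.obj (op m)),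
    Tm.map (pair γ a).op (q n) = a
  pair_unique : ∀ {m n : C} (γ : m ⟶ n) (a : Tm.obj (op m)) (δ : m ⟶ s n),
    δ ≫ p n = γ → Tm.map δ.op (q n) = a → δ = pair γ a

attribute [instance] Ucwf.cat

/-- A strict morphism of ucwfs: a functor preserving the terminal object, the
terms (via a natural transformation) and context comprehension on the nose. -/
structure UcwfHom (X Y : Ucwf) where
  F : X.C ⥤ Y.C
  σ : ∀ Γ : X.C, X.Tm.obj (op Γ) → Y.Tm.obj (op (F.obj Γ))
  σ_natural : ∀ {Δ Γ : X.C} (γ : Δ ⟶ Γ) (a : X.Tm.obj (op Γ)),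
    σ Δ (X.Tm.map γ.op a) = Y.Tm.map (F.map γ).op (σ Γ a)
  pres_empty : F.obj X.empty = Y.empty
  pres_s : ∀ n : X.C, F.obj (X.s n) = Y.s (F.obj n)
  pres_p : ∀ n : X.C, F.map (X.p n) = eqToHom (pres_s n) ≫ Y.p (F.obj n)
  pres_q : ∀ n : X.C,
    σ (X.s n) (X.q n) = Y.Tm.map (eqToHom (pres_s n)).op (Y.q (F.obj n))

/-- The category of renamings: objects are natural numbers, and a morphism
`n ⟶ m` is an `m`-tuple of elements of `{1,…,n}` (i.e. `N(n,m) = n^m`). -/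
structure NCtx where
  n : ℕ

instance : Category NCtx where
  Hom a b := Fin b.n → Fin a.n
  id _ := fun i => i
  comp f g := f ∘ g

/-- The initial ucwf: base category the renamings, `Tm(n) = {1,…,n}` the
variables, substitution `i[(a_1,…,a_m)] = a_i`, `s(n) = n+1`,
`p_n = (1,…,n)` and `q_n = n+1`. -/
def NUcwf : Ucwf where
  C := NCtx
  empty := ⟨0⟩
  emptySub _ := fun i => i.elim0
  empty_unique f := funext fun i => i.elim0
  Tm :=
    { obj := fun X => Fin X.unop.n
      map := fun h => TypeCat.ofHom fun a => h.unop a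
      map_id := fun _ => rfl
      map_comp := fun _ _ => rfl }
  s x := ⟨x.n + 1⟩
  p x := Fin.castSucc
  q x := Fin.last x.n
  pair {m n} γ a := (Fin.snoc γ a : Fin (n.n + 1) → Fin m.n)
  pair_p {m n} γ a := funext fun i => by
    show (Fin.snoc γ a : Fin (n.n + 1) → Fin m.n) (Fin.castSucc i) = γ i
    simp
  pair_q {m n} γ a := by
    show (Fin.snoc γ a : Fin (n.n + 1) → Fin m.n) (Fin.last n.n) = a
    simp
  pair_unique {m n} γ a δ h1 h2 := funext fun i => by
    refine Fin.lastCases ?_ ?_ i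
    · show δ (Fin.last n.n) = (Fin.snoc γ a : Fin (n.n + 1) → Fin m.n) (Fin.last n.n)
      rw [Fin.snoc_last]
      exact h2
    · intro j
      show δ (Fin.castSucc j) = (Fin.snoc γ a : Fin (n.n + 1) → Fin m.n) (Fin.castSucc j)
      rw [Fin.snoc_castSucc]
      exact congrFun h1 j

/-! ### Auxiliary constructions for initiality -/

namespace NUcwfInit

variable (Y : Ucwf)

/-- Interpretation of contexts. -/
def nobj : ℕ → Y.C
  | 0 => Y.empty
  | n + 1 => Y.s (nobj n)

/-- Interpretation of variables. -/
def nvar : (n : ℕ) → Fin n → Y.Tm.obj (op (nobj Y n))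
  | n + 1, i =>
    Fin.lastCases (Y.q (nobj Y n))
      (fun j => Y.Tm.map (Y.p (nobj Y n)).op (nvar n j)) i

lemma nvar_last (n : ℕ) : nvar Y (n + 1) (Fin.last n) = Y.q (nobj Y n) := by
  rw [nvar]; exact Fin.lastCases_last ..

lemma nvar_castSucc (n : ℕ) (j : Fin n) :
    nvar Y (n + 1) (Fin.castSucc j) = Y.Tm.map (Y.p (nobj Y n)).op (nvar Y n j) := by
  rw [nvar]; exact Fin.lastCases_castSucc ..

/-- Interpretation of renamings. -/
def nmor : {n m : ℕ} → (Fin m → Fin n) → (nobj Y n ⟶ nobj Y m)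
  | _, 0, _ => Y.emptySub _
  | _, m + 1, f => Y.pair (nmor (f ∘ Fin.castSucc)) (nvar Y _ (f (Fin.last m)))

lemma map_comp_apply {a b c : Y.C} (f : a ⟶ b) (g : b ⟶ c) (x : Y.Tm.obj (op c)) :
    Y.Tm.map (f ≫ g).op x = Y.Tm.map f.op (Y.Tm.map g.op x) := by
  rw [op_comp, Y.Tm.map_comp]; rfl

lemma nmor_var {n m : ℕ} (f : Fin m → Fin n) (i : Fin m) :
    Y.Tm.map (nmor Y f).op (nvar Y m i) = nvar Y n (f i) := by
  induction m with
  | zero => exact i.elim0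
  | succ m ih =>
    refine Fin.lastCases ?_ (fun j => ?_) i
    · rw [nvar_last]
      exact Y.pair_q _ _
    · erw [nvar_castSucc, ← map_comp_apply,
        show nmor Y f ≫ Y.p (nobj Y m) = nmor Y (f ∘ Fin.castSucc) from Y.pair_p _ _]
      exact ih _ _

lemma nmor_unique {n m : ℕ} (f : Fin m → Fin n) (δ : nobj Y n ⟶ nobj Y m)
    (h : ∀ i, Y.Tm.map δ.op (nvar Y m i) = nvar Y n (f i)) : δ = nmor Y f := by
  induction m with
  | zero => exact Y.empty_unique δ
  | succ m ih =>
    refine Y.pair_unique _ _ _ ?_ ?_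
    · refine ih _ (δ ≫ Y.p (nobj Y m)) (fun j => ?_)
      erw [map_comp_apply, ← nvar_castSucc]
      exact h (Fin.castSucc j)
    · have := h (Fin.last m)
      rwa [nvar_last] at this

/-- The underlying functor of the canonical ucwf-morphism. -/
def theF : NCtx ⥤ Y.C where
  obj Γ := nobj Y Γ.n
  map f := nmor Y f
  map_id Γ := by
    symm
    exact nmor_unique Y _ _ (fun i => by
      rw [op_id, FunctorToTypes.map_id_apply]
      rfl)
  map_comp {a b c} f g := by
    symm
    refine nmor_unique Y _ _ (fun i => ?_)
    rw [map_comp_apply, nmor_var, nmor_var]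
    rfl

/-- The canonical strict ucwf-morphism out of `NUcwf`. -/
def theHom : UcwfHom NUcwf Y where
  F := theF Y
  σ Γ a := nvar Y Γ.n a
  σ_natural γ a := (nmor_var Y γ a).symm
  pres_empty := rfl
  pres_s _ := rfl
  pres_p n := by
    erw [eqToHom_refl, Category.id_comp]
    exact (nmor_unique Y _ _ (fun i => (nvar_castSucc Y n.n i).symm)).symm
  pres_q n := by
    show nvar Y (n.n + 1) (Fin.last n.n) =
      Y.Tm.map (eqToHom (rfl : Y.s (nobj Y n.n) = Y.s (nobj Y n.n))).op (Y.q (nobj Y n.n))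
    simpa using nvar_last Y n.n

lemma q_transport {A B : Y.C} (h : A = B) :
    Y.Tm.map (eqToHom (congrArg Y.s h)).op (Y.q B) = Y.q A := by
  subst h; simp

lemma p_transport {A B : Y.C} (h : A = B) :
    eqToHom (congrArg Y.s h) ≫ Y.p B = Y.p A ≫ eqToHom h := by
  subst h; simp

end NUcwfInit

/-- the concrete ucwf of renamings and variables is an initial
object in the category of small ucwfs and strict ucwf-morphisms: for every
ucwf there is a unique strict ucwf-morphism from it. -/
theorem NUcwf_initial (Y : Ucwf) :
    ∃ f : UcwfHom NUcwf Y, ∀ g : UcwfHom NUcwf Y, g = f := by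
  open NUcwfInit in
  refine ⟨theHom Y, ?_⟩
  rintro ⟨F, σ, σnat, pe, ps, pp, pq⟩
  -- objects are preserved
  have hobj : ∀ n : ℕ, F.obj ⟨n⟩ = nobj Y n := by
    intro n
    induction n with
    | zero => exact pe
    | succ n ih => exact (ps ⟨n⟩).trans (congrArg Y.s ih)
  -- variables are preserved
  have hvar : ∀ (n : ℕ) (i : Fin n),
      σ ⟨n⟩ i = Y.Tm.map (eqToHom (hobj n)).op (nvar Y n i) := by
    intro n
    induction n with
    | zero => exact fun i => i.elim0
    | succ n ih =>
      intro i
      refine Fin.lastCases ?_ (fun j => ?_) i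
      · have h1 : σ ⟨n + 1⟩ (Fin.last n) =
            Y.Tm.map (eqToHom (ps ⟨n⟩)).op (Y.q (F.obj ⟨n⟩)) := pq ⟨n⟩
        rw [h1, nvar_last, ← q_transport Y (hobj n), ← map_comp_apply]
        simp [eqToHom_trans]
        rfl
      · have h1 : σ ⟨n + 1⟩ (Fin.castSucc j) =
            Y.Tm.map (F.map (NUcwf.p ⟨n⟩)).op (σ ⟨n⟩ j) := σnat (NUcwf.p ⟨n⟩) j
        erw [h1, pp ⟨n⟩, ih j, nvar_castSucc, ← map_comp_apply, ← map_comp_apply]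
        rw [Category.assoc, ← p_transport Y (hobj n), ← Category.assoc,
          eqToHom_trans]
        rfl
  -- the functors agree
  have hF : F = theF Y := by
    refine CategoryTheory.Functor.ext (fun Γ => hobj Γ.n) (fun Γ Δ γ => ?_)
    have key : eqToHom (hobj Γ.n).symm ≫ F.map γ ≫ eqToHom (hobj Δ.n) =
        nmor Y γ := by
      refine nmor_unique Y γ _ (fun i => ?_)
      erw [map_comp_apply, map_comp_apply, ← hvar Δ.n i]
      have h2 : Y.Tm.map (F.map γ).op (σ ⟨Δ.n⟩ i) = σ ⟨Γ.n⟩ (γ i) := (σnat γ i).symm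
      erw [h2, hvar Γ.n (γ i), ← map_comp_apply, eqToHom_trans, eqToHom_refl,
        op_id, FunctorToTypes.map_id_apply]
    refine (show F.map γ = eqToHom (hobj Γ.n) ≫
          (eqToHom (hobj Γ.n).symm ≫ F.map γ ≫ eqToHom (hobj Δ.n)) ≫
          eqToHom (hobj Δ.n).symm by
            simp; erw [eqToHom_trans, eqToHom_refl, Category.comp_id]; rfl).trans ?_
    rw [key]; rfl
  subst hF
  -- the term actions agree
  have hσ : σ = (theHom Y).σ := by
    funext Γ a
    obtain ⟨n⟩ := Γ
    have e : eqToHom (hobj n) = 𝟙 (nobj Y n) := rfl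
    rw [hvar n a, e]
    show Y.Tm.map (𝟙 (op (nobj Y n))) (nvar Y n a) = nvar Y n a
    rw [FunctorToTypes.map_id_apply]
  subst hσ
  rfl
end

section
/- Let C be a ucwf. Then λβη-structures on C are in bijective correspondence with natural isomorphisms of presheaves λ : Tm(s(−)) ≅ Tm(−), where s acts on morphisms by s(γ) = ⟨γ ∘ p, q⟩. Specifically: (1) the abstraction operator of any λβη-structure is such a natural isomorphism; (2) given such a natural isomorphism λ, there is a unique λβη-structure whose abstraction operator is λ, with application defined by ap_n(c, a) = λ_n^{-1}(c)[⟨id_n, a⟩]. -/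
open CategoryTheory Opposite

/-- The functorial action of `s` on substitutions: `s(γ) = ⟨γ ∘ p, q⟩`. -/
def Ucwf.sMap (U : Ucwf) {m n : U.C} (γ : m ⟶ n) : U.s m ⟶ U.s n :=
  U.pair (U.p m ≫ γ) (U.q m)

/-- A λβη-structure on a ucwf: abstraction and application operators
satisfying the substitution laws and the β- and η-rules. -/
structure LamBetaEtaStructure (U : Ucwf) where
  lam : ∀ n : U.C, U.Tm.obj (op (U.s n)) → U.Tm.obj (op n)
  ap : ∀ n : U.C, U.Tm.obj (op n) → U.Tm.obj (op n) → U.Tm.obj (op n)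
  lam_sub : ∀ {m n : U.C} (γ : m ⟶ n) (b : U.Tm.obj (op (U.s n))),
    U.Tm.map γ.op (lam n b) = lam m (U.Tm.map (U.sMap γ).op b)
  ap_sub : ∀ {m n : U.C} (γ : m ⟶ n) (c a : U.Tm.obj (op n)),
    U.Tm.map γ.op (ap n c a) = ap m (U.Tm.map γ.op c) (U.Tm.map γ.op a)
  beta : ∀ (n : U.C) (b : U.Tm.obj (op (U.s n))) (a : U.Tm.obj (op n)),
    ap n (lam n b) a = U.Tm.map (U.pair (𝟙 n) a).op b
  eta : ∀ (n : U.C) (c : U.Tm.obj (op n)),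
    lam n (ap (U.s n) (U.Tm.map (U.p n).op c) (U.q n)) = c

namespace Ucwf

lemma comp_pair (U : Ucwf) {k m n : U.C} (δ : k ⟶ m) (γ : m ⟶ n)
    (a : U.Tm.obj (op m)) :
    δ ≫ U.pair γ a = U.pair (δ ≫ γ) (U.Tm.map δ.op a) := by
  apply U.pair_unique
  · rw [Category.assoc, U.pair_p]
  · show U.Tm.map ((U.pair γ a).op ≫ δ.op) (U.q n) = _
    rw [U.Tm.map_comp, types_comp_apply, U.pair_q]

lemma pair_p_q (U : Ucwf) (n : U.C) : U.pair (U.p n) (U.q n) = 𝟙 (U.s n) := by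
  symm
  apply U.pair_unique <;> simp

lemma pair_id_q_sMap_p (U : Ucwf) (n : U.C) :
    U.pair (𝟙 (U.s n)) (U.q n) ≫ U.sMap (U.p n) = 𝟙 (U.s n) := by
  rw [Ucwf.sMap, comp_pair, ← Category.assoc, U.pair_p, Category.id_comp,
    U.pair_q, pair_p_q]

lemma pair_id_comp_sMap (U : Ucwf) {m n : U.C} (γ : m ⟶ n) (a : U.Tm.obj (op n)) :
    U.pair (𝟙 m) (U.Tm.map γ.op a) ≫ U.sMap γ = γ ≫ U.pair (𝟙 n) a := by
  rw [Ucwf.sMap, comp_pair, ← Category.assoc, U.pair_p, Category.id_comp,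
    U.pair_q, comp_pair, Category.comp_id]

end Ucwf

lemma LamBetaEtaStructure.ext' {U : Ucwf} {L L' : LamBetaEtaStructure U}
    (h : L.lam = L'.lam) (h' : L.ap = L'.ap) : L = L' := by
  cases L; cases L'; cases h; cases h'; rfl

lemma lam_retract {U : Ucwf} (L : LamBetaEtaStructure U) (n : U.C)
    (b : U.Tm.obj (op (U.s n))) :
    L.ap (U.s n) (U.Tm.map (U.p n).op (L.lam n b)) (U.q n) = b := by
  rw [L.lam_sub, L.beta, ← types_comp_apply (U.Tm.map _) (U.Tm.map _),
    ← U.Tm.map_comp, ← op_comp, U.pair_id_q_sMap_p]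
  simp

/-- λβη-structures on a ucwf `U` correspond exactly to natural
isomorphisms `Tm(s(−)) ≅ Tm(−)`:
(1) the abstraction operator of any λβη-structure is a natural family of
bijections;
(2) given a natural family of bijections `lam₀`, there is a unique
λβη-structure whose abstraction operator is `lam₀`, and its application is
given by `ap n c a = lam₀⁻¹(c)[⟨id_n, a⟩]`, i.e. `lam₀ n b = c` implies
`ap n c a = b[⟨id_n, a⟩]`. -/
theorem lambda_beta_eta_structures_are_natural_isos (U : Ucwf) :
    (∀ L : LamBetaEtaStructure U,
      (∀ n : U.C, Function.Bijective (L.lam n)) ∧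
      (∀ {m n : U.C} (γ : m ⟶ n) (b : U.Tm.obj (op (U.s n))),
        U.Tm.map γ.op (L.lam n b) = L.lam m (U.Tm.map (U.sMap γ).op b))) ∧
    (∀ lam₀ : ∀ n : U.C, U.Tm.obj (op (U.s n)) → U.Tm.obj (op n),
      (∀ n, Function.Bijective (lam₀ n)) →
      (∀ {m n : U.C} (γ : m ⟶ n) (b : U.Tm.obj (op (U.s n))),
        U.Tm.map γ.op (lam₀ n b) = lam₀ m (U.Tm.map (U.sMap γ).op b)) →
      ∃! L : LamBetaEtaStructure U,
        L.lam = lam₀ ∧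
        ∀ (n : U.C) (b : U.Tm.obj (op (U.s n))) (c a : U.Tm.obj (op n)),
          lam₀ n b = c → L.ap n c a = U.Tm.map (U.pair (𝟙 n) a).op b) := by
  constructor
  · intro L
    refine ⟨fun n => ⟨fun b b' h => ?_, fun c => ⟨L.ap (U.s n) (U.Tm.map (U.p n).op c) (U.q n), L.eta n c⟩⟩, fun γ b => L.lam_sub γ b⟩
    rw [← lam_retract L n b, h, lam_retract L n b']
  · intro lam₀ hbij hnat
    set e : ∀ n : U.C, U.Tm.obj (op (U.s n)) ≃ U.Tm.obj (op n) :=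
      fun n => Equiv.ofBijective (lam₀ n) (hbij n) with he
    have symm_nat : ∀ {m n : U.C} (γ : m ⟶ n) (c : U.Tm.obj (op n)),
        (e m).symm (U.Tm.map γ.op c) = U.Tm.map (U.sMap γ).op ((e n).symm c) := by
      intro m n γ c
      apply (hbij m).1
      show lam₀ m _ = lam₀ m _
      rw [← hnat]
      have : lam₀ n ((e n).symm c) = c := (e n).apply_symm_apply c
      rw [this]
      exact ((e m).apply_symm_apply _)
    refine ⟨{ lam := lam₀
              ap := fun n c a => U.Tm.map (U.pair (𝟙 n) a).op ((e n).symm c)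
              lam_sub := fun γ b => hnat γ b
              ap_sub := ?_
              beta := ?_
              eta := ?_ }, ⟨rfl, ?_⟩, ?_⟩
    · intro m n γ c a
      simp only [symm_nat]
      rw [← types_comp_apply (U.Tm.map _) (U.Tm.map γ.op), ← U.Tm.map_comp, ← op_comp,
        ← types_comp_apply (U.Tm.map _) (U.Tm.map _), ← U.Tm.map_comp, ← op_comp,
        U.pair_id_comp_sMap]
    · intro n b a
      have : (e n).symm (lam₀ n b) = b := (e n).symm_apply_apply b
      simp only [this]
    · intro n c
      simp only [symm_nat]
      rw [← types_comp_apply (U.Tm.map _) (U.Tm.map _), ← U.Tm.map_comp, ← op_comp,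
        U.pair_id_q_sMap_p]
      simp only [op_id, CategoryTheory.Functor.map_id, types_id_apply]
      exact (e n).apply_symm_apply c
    · intro n b c a h
      show U.Tm.map (U.pair (𝟙 n) a).op ((e n).symm c) = _
      rw [← h]
      exact congrArg _ ((e n).symm_apply_apply b)
    · rintro L' ⟨h1, h2⟩
      refine LamBetaEtaStructure.ext' h1 ?_
      funext n c a
      have hb : lam₀ n ((e n).symm c) = c := (e n).apply_symm_apply c
      exact h2 n ((e n).symm c) c a hb
end

section
/- Given an scwf C with finite product types, for each context Γ the category Ty(Γ) — with objects the types of C, morphisms from A to B the terms in Tm(Γ·A, B), composition c ∘ b = c[⟨p, b⟩], and identity id = q — is a cartesian category with structure: N₁ is a chosen terminal object, and A × B with projections fst(q_{Γ,A×B}) and snd(q_{Γ,A×B}) is a chosen binary product. -/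
open CategoryTheory Opposite

/-- A simply typed category with families (scwf): a category of contexts with
a terminal object (the empty context), a set of types, a presheaf of terms for
each type, and context comprehension. -/
structure Scwf where
  C : Type
  [cat : Category C]
  unit : C
  emptySub : ∀ Γ : C, Γ ⟶ unit
  empty_unique : ∀ {Γ : C} (f : Γ ⟶ unit), f = emptySub Γ
  Ty : Type
  Tm : Ty → Cᵒᵖ ⥤ Type
  ext : C → Ty → C
  p : ∀ (Γ : C) (A : Ty), ext Γ A ⟶ Γ
  q : ∀ (Γ : C) (A : Ty), (Tm A).obj (op (ext Γ A))
  pair : ∀ {Δ Γ : C} (A : Ty) (_ : Δ ⟶ Γ) (_ : (Tm A).obj (op Δ)), Δ ⟶ ext Γ A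
  pair_p : ∀ {Δ Γ : C} (A : Ty) (γ : Δ ⟶ Γ) (a : (Tm A).obj (op Δ)),
    pair A γ a ≫ p Γ A = γ
  pair_q : ∀ {Δ Γ : C} (A : Ty) (γ : Δ ⟶ Γ) (a : (Tm A).obj (op Δ)),
    (Tm A).map (pair A γ a).op (q Γ A) = a
  pair_unique : ∀ {Δ Γ : C} (A : Ty) (γ : Δ ⟶ Γ) (a : (Tm A).obj (op Δ))
    (δ : Δ ⟶ ext Γ A), δ ≫ p Γ A = γ → (Tm A).map δ.op (q Γ A) = a →
    δ = pair A γ a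

attribute [instance] Scwf.cat

/-- An `N₁`-structure (unit type) on an scwf. -/
structure UnitStructure (S : Scwf) where
  one : S.Ty
  star : ∀ Γ : S.C, (S.Tm one).obj (op Γ)
  star_unique : ∀ {Γ : S.C} (c : (S.Tm one).obj (op Γ)), c = star Γ

/-- A `×`-structure (binary product types) on an scwf. -/
structure ProdStructure (S : Scwf) where
  prod : S.Ty → S.Ty → S.Ty
  fst : ∀ {Γ : S.C} {A B : S.Ty},
    (S.Tm (prod A B)).obj (op Γ) → (S.Tm A).obj (op Γ)
  snd : ∀ {Γ : S.C} {A B : S.Ty},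
    (S.Tm (prod A B)).obj (op Γ) → (S.Tm B).obj (op Γ)
  pairTm : ∀ {Γ : S.C} {A B : S.Ty},
    (S.Tm A).obj (op Γ) → (S.Tm B).obj (op Γ) → (S.Tm (prod A B)).obj (op Γ)
  fst_pair : ∀ {Γ : S.C} {A B : S.Ty} (a : (S.Tm A).obj (op Γ))
    (b : (S.Tm B).obj (op Γ)), fst (pairTm a b) = a
  snd_pair : ∀ {Γ : S.C} {A B : S.Ty} (a : (S.Tm A).obj (op Γ))
    (b : (S.Tm B).obj (op Γ)), snd (pairTm a b) = b
  pair_eta : ∀ {Γ : S.C} {A B : S.Ty} (c : (S.Tm (prod A B)).obj (op Γ)),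
    pairTm (fst c) (snd c) = c
  pair_sub : ∀ {Δ Γ : S.C} {A B : S.Ty} (γ : Δ ⟶ Γ) (a : (S.Tm A).obj (op Γ))
    (b : (S.Tm B).obj (op Γ)),
    (S.Tm (prod A B)).map γ.op (pairTm a b) =
      pairTm ((S.Tm A).map γ.op a) ((S.Tm B).map γ.op b)

/-- A `⇒`-structure (function types) on an scwf. -/
structure ArrStructure (S : Scwf) where
  arr : S.Ty → S.Ty → S.Ty
  lam : ∀ {Γ : S.C} {A B : S.Ty},
    (S.Tm B).obj (op (S.ext Γ A)) → (S.Tm (arr A B)).obj (op Γ)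
  app : ∀ {Γ : S.C} {A B : S.Ty},
    (S.Tm (arr A B)).obj (op Γ) → (S.Tm A).obj (op Γ) → (S.Tm B).obj (op Γ)
  lam_sub : ∀ {Δ Γ : S.C} {A B : S.Ty} (γ : Δ ⟶ Γ)
    (b : (S.Tm B).obj (op (S.ext Γ A))),
    (S.Tm (arr A B)).map γ.op (lam b) =
      lam ((S.Tm B).map (S.pair A (S.p Δ A ≫ γ) (S.q Δ A)).op b)
  app_sub : ∀ {Δ Γ : S.C} {A B : S.Ty} (γ : Δ ⟶ Γ)
    (c : (S.Tm (arr A B)).obj (op Γ)) (a : (S.Tm A).obj (op Γ)),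
    (S.Tm B).map γ.op (app c a) =
      app ((S.Tm (arr A B)).map γ.op c) ((S.Tm A).map γ.op a)
  beta : ∀ {Γ : S.C} {A B : S.Ty} (b : (S.Tm B).obj (op (S.ext Γ A)))
    (a : (S.Tm A).obj (op Γ)),
    app (lam b) a = (S.Tm B).map (S.pair A (𝟙 Γ) a).op b
  eta : ∀ {Γ : S.C} {A B : S.Ty} (c : (S.Tm (arr A B)).obj (op Γ)),
    lam (app ((S.Tm (arr A B)).map (S.p Γ A).op c) (S.q Γ A)) = c

/-- Composition in the category `Ty(Γ)` of types and terms in context `Γ`: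
`c ∘ b = c[⟨p, b⟩]`. -/
def Scwf.tyComp (S : Scwf) (Γ : S.C) {A B C' : S.Ty}
    (b : (S.Tm B).obj (op (S.ext Γ A))) (c : (S.Tm C').obj (op (S.ext Γ B))) :
    (S.Tm C').obj (op (S.ext Γ A)) :=
  (S.Tm C').map (S.pair B (S.p Γ A) b).op c

/-- An scwf is contextual if there is a length function exhibiting every
context as an iterated comprehension `1·A₁·…·Aₙ`. -/
def Scwf.Contextual (S : Scwf) : Prop :=
  ∃ l : S.C → ℕ,
    (∀ Γ, l Γ = 0 ↔ Γ = S.unit) ∧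
    (∀ Γ n, l Γ = n + 1 ↔
      ∃! ΔA : S.C × S.Ty, Γ = S.ext ΔA.1 ΔA.2 ∧ l ΔA.1 = n)

lemma fst_sub (S : Scwf) (P : ProdStructure S) {Δ Γ : S.C} {A B : S.Ty}
    (γ : Δ ⟶ Γ) (c : (S.Tm (P.prod A B)).obj (op Γ)) :
    P.fst ((S.Tm (P.prod A B)).map γ.op c) = (S.Tm A).map γ.op (P.fst c) := by
  conv_lhs => rw [← P.pair_eta c, P.pair_sub, P.fst_pair]

lemma snd_sub (S : Scwf) (P : ProdStructure S) {Δ Γ : S.C} {A B : S.Ty}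
    (γ : Δ ⟶ Γ) (c : (S.Tm (P.prod A B)).obj (op Γ)) :
    P.snd ((S.Tm (P.prod A B)).map γ.op c) = (S.Tm B).map γ.op (P.snd c) := by
  conv_lhs => rw [← P.pair_eta c, P.pair_sub, P.snd_pair]

lemma comp_fst (S : Scwf) (P : ProdStructure S) {Γ : S.C} {A B X : S.Ty}
    (h : (S.Tm (P.prod A B)).obj (op (S.ext Γ X))) :
    S.tyComp Γ h (P.fst (S.q Γ (P.prod A B))) = P.fst h := by
  unfold Scwf.tyComp
  rw [← fst_sub, S.pair_q]

lemma comp_snd (S : Scwf) (P : ProdStructure S) {Γ : S.C} {A B X : S.Ty}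
    (h : (S.Tm (P.prod A B)).obj (op (S.ext Γ X))) :
    S.tyComp Γ h (P.snd (S.q Γ (P.prod A B))) = P.snd h := by
  unfold Scwf.tyComp
  rw [← snd_sub, S.pair_q]

/-- for an scwf with finite product types (an `N₁`-structure and
a `×`-structure), the category `Ty(Γ)` of types and terms in context `Γ`
(with morphisms `A ⟶ B` the terms in `Tm(Γ·A, B)`, composition
`c ∘ b = c[⟨p, b⟩]` and identity `q`) is a cartesian category with structure:
`N₁` is a chosen terminal object, and `A × B` with projections
`fst(q_{Γ,A×B})` and `snd(q_{Γ,A×B})` is a chosen binary product. -/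
theorem tyCategory_cartesian (S : Scwf) (U : UnitStructure S)
    (P : ProdStructure S) (Γ : S.C) :
    (∀ A : S.Ty, ∃! _h : (S.Tm U.one).obj (op (S.ext Γ A)), True) ∧
    (∀ (A B X : S.Ty) (f : (S.Tm A).obj (op (S.ext Γ X)))
       (g : (S.Tm B).obj (op (S.ext Γ X))),
      ∃! h : (S.Tm (P.prod A B)).obj (op (S.ext Γ X)),
        S.tyComp Γ h (P.fst (S.q Γ (P.prod A B))) = f ∧
        S.tyComp Γ h (P.snd (S.q Γ (P.prod A B))) = g) := by
  constructor
  · intro A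
    exact ⟨U.star _, trivial, fun c _ => U.star_unique c⟩
  · intro A B X f g
    refine ⟨P.pairTm f g, ⟨?_, ?_⟩, ?_⟩
    · rw [comp_fst, P.fst_pair]
    · rw [comp_snd, P.snd_pair]
    · rintro h ⟨hf, hg⟩
      rw [comp_fst] at hf; rw [comp_snd] at hg
      rw [← hf, ← hg, P.pair_eta]
end

section
/- If C is a democratic scwf, then its base category has finite products: the product of contexts Γ and Δ may be given by Γ · Δ̄, the comprehension of Γ by the type representing Δ, with projections p_{Γ, Δ̄} and the composite γ_Δ^{-1} ∘ ⟨⟨⟩, q⟩ (the map induced by q and democracy). -/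
open CategoryTheory Opposite

/-- A democratic scwf: each context `Γ` is represented by a type `Γ̄` via an
isomorphism `γ_Γ : Γ ≅ 1·Γ̄`. -/
structure DemScwf where
  S : Scwf
  bar : S.C → S.Ty
  demIso : ∀ Γ : S.C, Γ ≅ S.ext S.unit (bar Γ)

/-- Composing with a pair: `f ≫ ⟨γ, a⟩ = ⟨f ≫ γ, a[f]⟩`. -/
lemma Scwf.comp_pair (S : Scwf) {X Δ Γ : S.C} (A : S.Ty) (f : X ⟶ Δ)
    (γ : Δ ⟶ Γ) (a : (S.Tm A).obj (op Δ)) :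
    f ≫ S.pair A γ a = S.pair A (f ≫ γ) ((S.Tm A).map f.op a) := by
  apply S.pair_unique
  · rw [Category.assoc, S.pair_p]
  · have : (S.Tm A).map (f ≫ S.pair A γ a).op (S.q Γ A) =
        (S.Tm A).map f.op ((S.Tm A).map (S.pair A γ a).op (S.q Γ A)) := by
      rw [op_comp, (S.Tm A).map_comp]; rfl
    rw [this, S.pair_q]

/-- the base category of a democratic scwf has finite
products: the product of contexts `Γ` and `Δ` may be given by the
comprehension `Γ · Δ̄`, with first projection `p_{Γ,Δ̄}` and second projection
the composite `γ_Δ⁻¹ ∘ ⟨⟨⟩, q⟩`. -/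
theorem demscwf_base_has_products (D : DemScwf) (Γ Δ : D.S.C) :
    ∀ (X : D.S.C) (f : X ⟶ Γ) (g : X ⟶ Δ),
      ∃! h : X ⟶ D.S.ext Γ (D.bar Δ),
        h ≫ D.S.p Γ (D.bar Δ) = f ∧
        h ≫ (D.S.pair (D.bar Δ) (D.S.emptySub (D.S.ext Γ (D.bar Δ)))
              (D.S.q Γ (D.bar Δ)) ≫ (D.demIso Δ).inv) = g := by
  intro X f g
  let S := D.S
  let A := D.bar Δ
  set a : (S.Tm A).obj (op X) :=
    (S.Tm A).map (g ≫ (D.demIso Δ).hom).op (S.q S.unit A) with ha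
  have key : ∀ h : X ⟶ S.ext Γ A,
      (h ≫ (S.pair A (S.emptySub (S.ext Γ A)) (S.q Γ A) ≫ (D.demIso Δ).inv) = g)
      ↔ h ≫ S.pair A (S.emptySub (S.ext Γ A)) (S.q Γ A) = g ≫ (D.demIso Δ).hom := by
    intro h
    constructor
    · intro hh
      rw [← hh]; simp
    · intro hh
      rw [← Category.assoc, hh]; simp
  have ghom : g ≫ (D.demIso Δ).hom = S.pair A (S.emptySub X) a := by
    apply S.pair_unique
    · exact S.empty_unique _
    · rfl
  refine ⟨S.pair A f a, ⟨S.pair_p A f a, ?_⟩, ?_⟩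
  · rw [key, ghom, S.comp_pair, S.pair_q]
    congr 1
    exact (S.empty_unique _).trans (S.empty_unique _).symm
  · rintro h ⟨h1, h2⟩
    rw [key, ghom] at h2
    apply S.pair_unique _ _ _ _ h1
    have := congrArg (fun (k : X ⟶ S.ext S.unit A) => (S.Tm A).map k.op (S.q S.unit A))
      ((S.comp_pair A h _ _).symm.trans h2)
    simp only at this
    rw [S.pair_q, S.pair_q] at this
    exact this
end

section
/- A contextual cwf equipped with an N₁-structure and a Σ-structure is democratic: every context 1·A_1·...·A_n is represented (up to isomorphism with its comprehension over 1) by the iterated Σ-type Σ(A_1, Σ(A_2, ..., Σ(A_{n-1}, A_n)...)) ∈ Ty(1), and the empty context by N₁. -/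
open CategoryTheory Opposite

/-- A category with families (cwf): a category of contexts with a terminal
object, presheaves of types and (dependent) terms with substitution, and
context comprehension. -/
structure Cwf where
  C : Type
  [cat : Category C]
  unit : C
  emptySub : ∀ Γ : C, Γ ⟶ unit
  empty_unique : ∀ {Γ : C} (f : Γ ⟶ unit), f = emptySub Γ
  Ty : C → Type
  Tm : ∀ Γ : C, Ty Γ → Type
  tySub : ∀ {Δ Γ : C}, Ty Γ → (Δ ⟶ Γ) → Ty Δ
  tmSub : ∀ {Δ Γ : C} {A : Ty Γ}, Tm Γ A → ∀ γ : Δ ⟶ Γ, Tm Δ (tySub A γ)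
  tySub_id : ∀ {Γ : C} (A : Ty Γ), tySub A (𝟙 Γ) = A
  tySub_comp : ∀ {Θ Δ Γ : C} (A : Ty Γ) (γ : Δ ⟶ Γ) (δ : Θ ⟶ Δ),
    tySub A (δ ≫ γ) = tySub (tySub A γ) δ
  tmSub_id : ∀ {Γ : C} {A : Ty Γ} (a : Tm Γ A), HEq (tmSub a (𝟙 Γ)) a
  tmSub_comp : ∀ {Θ Δ Γ : C} {A : Ty Γ} (a : Tm Γ A) (γ : Δ ⟶ Γ)
    (δ : Θ ⟶ Δ), HEq (tmSub a (δ ≫ γ)) (tmSub (tmSub a γ) δ)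
  ext : ∀ Γ : C, Ty Γ → C
  p : ∀ (Γ : C) (A : Ty Γ), ext Γ A ⟶ Γ
  q : ∀ (Γ : C) (A : Ty Γ), Tm (ext Γ A) (tySub A (p Γ A))
  pair : ∀ {Δ Γ : C} (A : Ty Γ) (γ : Δ ⟶ Γ), Tm Δ (tySub A γ) → (Δ ⟶ ext Γ A)
  pair_p : ∀ {Δ Γ : C} (A : Ty Γ) (γ : Δ ⟶ Γ) (a : Tm Δ (tySub A γ)),
    pair A γ a ≫ p Γ A = γ
  pair_q : ∀ {Δ Γ : C} (A : Ty Γ) (γ : Δ ⟶ Γ) (a : Tm Δ (tySub A γ)),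
    HEq (tmSub (q Γ A) (pair A γ a)) a
  pair_unique : ∀ {Δ Γ : C} (A : Ty Γ) (γ : Δ ⟶ Γ) (a : Tm Δ (tySub A γ))
    (δ : Δ ⟶ ext Γ A), δ ≫ p Γ A = γ → HEq (tmSub (q Γ A) δ) a →
    δ = pair A γ a

attribute [instance] Cwf.cat

/-- Transport of terms along an equality of types. -/
def Cwf.tmCast (S : Cwf) {Γ : S.C} {A B : S.Ty Γ} (h : A = B)
    (a : S.Tm Γ A) : S.Tm Γ B :=
  h ▸ a

/-- The weakening map `⟨γ ∘ p, q⟩ : Δ·A[γ] ⟶ Γ·A`. -/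
def Cwf.wk (S : Cwf) {Δ Γ : S.C} (γ : Δ ⟶ Γ) (A : S.Ty Γ) :
    S.ext Δ (S.tySub A γ) ⟶ S.ext Γ A :=
  S.pair A (S.p Δ (S.tySub A γ) ≫ γ)
    (S.tmCast (S.tySub_comp A γ (S.p Δ (S.tySub A γ))).symm
      (S.q Δ (S.tySub A γ)))

/-- The section `⟨id, a⟩ : Γ ⟶ Γ·A` of the display map induced by a term. -/
def Cwf.sec (S : Cwf) {Γ : S.C} {A : S.Ty Γ} (a : S.Tm Γ A) :
    Γ ⟶ S.ext Γ A :=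
  S.pair A (𝟙 Γ) (S.tmCast (S.tySub_id A).symm a)

/-- A Σ-structure (dependent sum types) on a cwf. -/
structure SigmaStructure (S : Cwf) where
  Sig : ∀ {Γ : S.C} (A : S.Ty Γ), S.Ty (S.ext Γ A) → S.Ty Γ
  Sig_sub : ∀ {Δ Γ : S.C} (A : S.Ty Γ) (B : S.Ty (S.ext Γ A)) (γ : Δ ⟶ Γ),
    S.tySub (Sig A B) γ = Sig (S.tySub A γ) (S.tySub B (S.wk γ A))
  sfst : ∀ {Γ : S.C} {A : S.Ty Γ} {B : S.Ty (S.ext Γ A)},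
    S.Tm Γ (Sig A B) → S.Tm Γ A
  ssnd : ∀ {Γ : S.C} {A : S.Ty Γ} {B : S.Ty (S.ext Γ A)}
    (c : S.Tm Γ (Sig A B)), S.Tm Γ (S.tySub B (S.sec (sfst c)))
  spair : ∀ {Γ : S.C} {A : S.Ty Γ} {B : S.Ty (S.ext Γ A)} (a : S.Tm Γ A),
    S.Tm Γ (S.tySub B (S.sec a)) → S.Tm Γ (Sig A B)
  fst_pair : ∀ {Γ : S.C} {A : S.Ty Γ} {B : S.Ty (S.ext Γ A)} (a : S.Tm Γ A)
    (b : S.Tm Γ (S.tySub B (S.sec a))), sfst (spair (B := B) a b) = a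
  snd_pair : ∀ {Γ : S.C} {A : S.Ty Γ} {B : S.Ty (S.ext Γ A)} (a : S.Tm Γ A)
    (b : S.Tm Γ (S.tySub B (S.sec a))), HEq (ssnd (spair (B := B) a b)) b
  pair_eta : ∀ {Γ : S.C} {A : S.Ty Γ} {B : S.Ty (S.ext Γ A)}
    (c : S.Tm Γ (Sig A B)), spair (sfst c) (ssnd c) = c
  spair_sub : ∀ {Δ Γ : S.C} {A : S.Ty Γ} {B : S.Ty (S.ext Γ A)}
    (a : S.Tm Γ A) (b : S.Tm Γ (S.tySub B (S.sec a))) (γ : Δ ⟶ Γ)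
    (b' : S.Tm Δ (S.tySub (S.tySub B (S.wk γ A)) (S.sec (S.tmSub a γ)))),
    HEq b' (S.tmSub b γ) →
    HEq (S.tmSub (spair (B := B) a b) γ)
        (spair (B := S.tySub B (S.wk γ A)) (S.tmSub a γ) b')

/-- An `N₁`-structure (unit type) on a cwf, stable under substitution. -/
structure UnitTyStructure (S : Cwf) where
  one : ∀ Γ : S.C, S.Ty Γ
  one_sub : ∀ {Δ Γ : S.C} (γ : Δ ⟶ Γ), S.tySub (one Γ) γ = one Δ
  star : ∀ Γ : S.C, S.Tm Γ (one Γ)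
  star_unique : ∀ {Γ : S.C} (c : S.Tm Γ (one Γ)), c = star Γ

/-- A cwf is contextual if there is a length function exhibiting every
context as an iterated comprehension of the empty context. -/
def Cwf.Contextual (S : Cwf) : Prop :=
  ∃ l : S.C → ℕ,
    (∀ Γ, l Γ = 0 ↔ Γ = S.unit) ∧
    (∀ Γ n, l Γ = n + 1 ↔
      ∃! ΔA : Σ Δ : S.C, S.Ty Δ, Γ = S.ext ΔA.1 ΔA.2 ∧ l ΔA.1 = n)

/-- A cwf is democratic if every context is represented by a closed type, up
to isomorphism with its comprehension over the empty context. -/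
def Cwf.Democratic (S : Cwf) : Prop :=
  ∃ bar : S.C → S.Ty S.unit, ∀ Γ : S.C, Nonempty (Γ ≅ S.ext S.unit (bar Γ))

namespace Cwf

variable (S : Cwf)

theorem tmCast_heq {Γ : S.C} {A B : S.Ty Γ} (h : A = B) (a : S.Tm Γ A) :
    HEq (S.tmCast h a) a := by subst h; rfl

theorem tmSub_congr {Δ Γ : S.C} {A B : S.Ty Γ} (h : A = B)
    {a : S.Tm Γ A} {b : S.Tm Γ B} (hab : HEq a b) (γ : Δ ⟶ Γ) :
    HEq (S.tmSub a γ) (S.tmSub b γ) := by subst h; cases hab; rfl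

theorem ext_hom_ext {Δ Γ : S.C} {A : S.Ty Γ} {δ₁ δ₂ : Δ ⟶ S.ext Γ A}
    (hp : δ₁ ≫ S.p Γ A = δ₂ ≫ S.p Γ A)
    (hq : HEq (S.tmSub (S.q Γ A) δ₁) (S.tmSub (S.q Γ A) δ₂)) : δ₁ = δ₂ := by
  have h2 := S.pair_unique A (δ₂ ≫ S.p Γ A)
    (S.tmCast (S.tySub_comp A (S.p Γ A) δ₂).symm (S.tmSub (S.q Γ A) δ₂)) δ₂ rfl
    (S.tmCast_heq _ _).symm
  have h1 := S.pair_unique A (δ₂ ≫ S.p Γ A)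
    (S.tmCast (S.tySub_comp A (S.p Γ A) δ₂).symm (S.tmSub (S.q Γ A) δ₂)) δ₁ hp
    (hq.trans (S.tmCast_heq _ _).symm)
  rw [h1, ← h2]

/-- Generalized weakening morphism. -/
def extMor {Δ Γ : S.C} (γ : Δ ⟶ Γ) (A : S.Ty Γ) (B : S.Ty Δ)
    (h : B = S.tySub A γ) : S.ext Δ B ⟶ S.ext Γ A :=
  S.pair A (S.p Δ B ≫ γ)
    (S.tmCast (by rw [h, ← S.tySub_comp]) (S.q Δ B))

theorem wk_eq {Δ Γ : S.C} (γ : Δ ⟶ Γ) (A : S.Ty Γ) :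
    S.wk γ A = S.extMor γ A (S.tySub A γ) rfl := rfl

theorem extMor_p {Δ Γ : S.C} (γ : Δ ⟶ Γ) (A : S.Ty Γ) (B : S.Ty Δ)
    (h : B = S.tySub A γ) :
    S.extMor γ A B h ≫ S.p Γ A = S.p Δ B ≫ γ := S.pair_p _ _ _

theorem extMor_q {Δ Γ : S.C} (γ : Δ ⟶ Γ) (A : S.Ty Γ) (B : S.Ty Δ)
    (h : B = S.tySub A γ) :
    HEq (S.tmSub (S.q Γ A) (S.extMor γ A B h)) (S.q Δ B) :=
  (S.pair_q _ _ _).trans (S.tmCast_heq _ _)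

theorem extMor_comp {Θ Δ Γ : S.C} (γ₁ : Θ ⟶ Δ) (γ₂ : Δ ⟶ Γ)
    (A : S.Ty Γ) (B : S.Ty Δ) (C : S.Ty Θ)
    (h₁ : C = S.tySub B γ₁) (h₂ : B = S.tySub A γ₂) :
    S.extMor γ₁ B C h₁ ≫ S.extMor γ₂ A B h₂ =
      S.extMor (γ₁ ≫ γ₂) A C (by rw [h₁, h₂, ← S.tySub_comp]) := by
  apply S.ext_hom_ext
  · rw [Category.assoc, S.extMor_p, ← Category.assoc, S.extMor_p,
      S.extMor_p, Category.assoc]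
  · refine ((S.tmSub_comp _ _ _).trans ?_).trans (S.extMor_q _ _ _ _).symm
    refine HEq.trans ?_ (S.extMor_q γ₁ B C h₁)
    exact S.tmSub_congr (by rw [← S.tySub_comp, S.extMor_p, S.tySub_comp, h₂])
      (S.extMor_q γ₂ A B h₂) _

theorem extMor_id {Γ : S.C} (A : S.Ty Γ) (h : A = S.tySub A (𝟙 Γ)) :
    S.extMor (𝟙 Γ) A A h = 𝟙 (S.ext Γ A) := by
  apply S.ext_hom_ext
  · rw [S.extMor_p, Category.comp_id, Category.id_comp]
  · exact (S.extMor_q _ _ _ _).trans (S.tmSub_id _).symm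

theorem extMor_congr {Δ Γ : S.C} {γ₁ γ₂ : Δ ⟶ Γ} (hγ : γ₁ = γ₂)
    (A : S.Ty Γ) (B : S.Ty Δ) (h₁ : B = S.tySub A γ₁) (h₂ : B = S.tySub A γ₂) :
    S.extMor γ₁ A B h₁ = S.extMor γ₂ A B h₂ := by subst hγ; rfl

theorem extMor_congr' {Δ Γ : S.C} (γ : Δ ⟶ Γ) (A : S.Ty Γ)
    {B₁ B₂ : S.Ty Δ} (hB : B₁ = B₂) (h₁ : B₁ = S.tySub A γ)
    (h₂ : B₂ = S.tySub A γ) :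
    HEq (S.extMor γ A B₁ h₁) (S.extMor γ A B₂ h₂) := by subst hB; rfl

theorem tySub_heq_congr {Θ₁ Θ₂ Γ : S.C} (h : Θ₁ = Θ₂) (B : S.Ty Γ)
    {f₁ : Θ₁ ⟶ Γ} {f₂ : Θ₂ ⟶ Γ} (hf : HEq f₁ f₂) :
    HEq (S.tySub B f₁) (S.tySub B f₂) := by subst h; cases hf; rfl

/-- An isomorphism of contexts lifts to comprehensions. -/
def extIso {Δ Γ : S.C} (φ : Δ ≅ Γ) (A : S.Ty Γ) (B : S.Ty Δ)
    (h : B = S.tySub A φ.hom) : S.ext Δ B ≅ S.ext Γ A where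
  hom := S.extMor φ.hom A B h
  inv := S.extMor φ.inv B A (by rw [h, ← S.tySub_comp, φ.inv_hom_id, S.tySub_id])
  hom_inv_id := by
    rw [S.extMor_comp]
    exact (S.extMor_congr φ.hom_inv_id B B _ (S.tySub_id B).symm).trans
      (S.extMor_id B _)
  inv_hom_id := by
    rw [S.extMor_comp]
    exact (S.extMor_congr φ.inv_hom_id A A _ (S.tySub_id A).symm).trans
      (S.extMor_id A _)

theorem wk_p {Δ Γ : S.C} (γ : Δ ⟶ Γ) (A : S.Ty Γ) :
    S.wk γ A ≫ S.p Γ A = S.p Δ (S.tySub A γ) ≫ γ := S.pair_p _ _ _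

theorem wk_q {Δ Γ : S.C} (γ : Δ ⟶ Γ) (A : S.Ty Γ) :
    HEq (S.tmSub (S.q Γ A) (S.wk γ A)) (S.q Δ (S.tySub A γ)) :=
  (S.pair_q _ _ _).trans (S.tmCast_heq _ _)

theorem sec_p {Γ : S.C} {A : S.Ty Γ} (a : S.Tm Γ A) :
    S.sec a ≫ S.p Γ A = 𝟙 Γ := S.pair_p _ _ _

theorem sec_q {Γ : S.C} {A : S.Ty Γ} (a : S.Tm Γ A) :
    HEq (S.tmSub (S.q Γ A) (S.sec a)) a :=
  (S.pair_q _ _ _).trans (S.tmCast_heq _ _)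

theorem sec_wk {Δ Γ : S.C} (γ : Δ ⟶ Γ) (A : S.Ty Γ) (a : S.Tm Δ (S.tySub A γ)) :
    S.sec a ≫ S.wk γ A = S.pair A γ a := by
  refine S.pair_unique _ _ _ _ ?_ ?_
  · rw [Category.assoc, S.wk_p, ← Category.assoc, S.sec_p, Category.id_comp]
  · refine ((S.tmSub_comp _ _ _).trans ?_)
    refine HEq.trans ?_ (S.sec_q a)
    exact S.tmSub_congr (by rw [← S.tySub_comp, S.wk_p, S.tySub_comp])
      (S.wk_q γ A) _

theorem comp_sec {Δ Γ : S.C} (γ : Δ ⟶ Γ) {A : S.Ty Γ} (a : S.Tm Γ A) :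
    γ ≫ S.sec a = S.sec (S.tmSub a γ) ≫ S.wk γ A := by
  rw [S.sec_wk]
  refine S.pair_unique _ _ _ _ ?_ ?_
  · rw [Category.assoc, S.sec_p, Category.comp_id]
  · refine ((S.tmSub_comp _ _ _).trans ?_)
    exact S.tmSub_congr (by rw [← S.tySub_comp, S.sec_p, S.tySub_id])
      (S.sec_q a) γ

end Cwf
namespace Cwf
variable (S : Cwf) (Sg : SigmaStructure S)

theorem sec_sub_ty {Δ Γ : S.C} (γ : Δ ⟶ Γ) {A : S.Ty Γ} (a : S.Tm Γ A)
    (B' : S.Ty (S.ext Γ A)) :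
    S.tySub (S.tySub B' (S.sec a)) γ =
      S.tySub (S.tySub B' (S.wk γ A)) (S.sec (S.tmSub a γ)) := by
  rw [← S.tySub_comp, S.comp_sec, S.tySub_comp]

theorem tySub_wk_wk {E Δ Γ : S.C} (f : E ⟶ Δ) {γ : Δ ⟶ Γ} {δ : E ⟶ Γ}
    (h : f ≫ γ = δ) (A : S.Ty Γ) (B : S.Ty (S.ext Γ A)) :
    HEq (S.tySub (S.tySub B (S.wk γ A)) (S.wk f (S.tySub A γ)))
      (S.tySub B (S.wk δ A)) := by
  subst h
  refine (heq_of_eq (S.tySub_comp B (S.wk γ A) (S.wk f (S.tySub A γ))).symm).trans ?_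
  refine S.tySub_heq_congr (by rw [← S.tySub_comp]) B ?_
  have e1 : S.wk f (S.tySub A γ) ≫ S.wk γ A =
      S.extMor (f ≫ γ) A (S.tySub (S.tySub A γ) f)
        (by rw [← S.tySub_comp]) := by
    rw [S.wk_eq f, S.wk_eq γ, S.extMor_comp]
  rw [e1, S.wk_eq (f ≫ γ)]
  exact S.extMor_congr' _ _ (S.tySub_comp A γ f).symm _ _

theorem sfst_congr {Γ : S.C} {A₁ A₂ : S.Ty Γ} (hA : A₁ = A₂)
    {B₁ : S.Ty (S.ext Γ A₁)} {B₂ : S.Ty (S.ext Γ A₂)} (hB : HEq B₁ B₂)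
    {c₁ : S.Tm Γ (Sg.Sig A₁ B₁)} {c₂ : S.Tm Γ (Sg.Sig A₂ B₂)}
    (hc : HEq c₁ c₂) : HEq (Sg.sfst c₁) (Sg.sfst c₂) := by
  subst hA; cases hB; cases hc; rfl

theorem ssnd_congr {Γ : S.C} {A₁ A₂ : S.Ty Γ} (hA : A₁ = A₂)
    {B₁ : S.Ty (S.ext Γ A₁)} {B₂ : S.Ty (S.ext Γ A₂)} (hB : HEq B₁ B₂)
    {c₁ : S.Tm Γ (Sg.Sig A₁ B₁)} {c₂ : S.Tm Γ (Sg.Sig A₂ B₂)}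
    (hc : HEq c₁ c₂) : HEq (Sg.ssnd c₁) (Sg.ssnd c₂) := by
  subst hA; cases hB; cases hc; rfl

theorem spair_congr {Γ : S.C} {A₁ A₂ : S.Ty Γ} (hA : A₁ = A₂)
    {B₁ : S.Ty (S.ext Γ A₁)} {B₂ : S.Ty (S.ext Γ A₂)} (hB : HEq B₁ B₂)
    {a₁ : S.Tm Γ A₁} {a₂ : S.Tm Γ A₂} (ha : HEq a₁ a₂)
    {b₁ : S.Tm Γ (S.tySub B₁ (S.sec a₁))} {b₂ : S.Tm Γ (S.tySub B₂ (S.sec a₂))}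
    (hb : HEq b₁ b₂) :
    HEq (Sg.spair (B := B₁) a₁ b₁) (Sg.spair (B := B₂) a₂ b₂) := by
  subst hA; cases hB; cases ha; cases hb; rfl

theorem sub_eq_spair {Δ Γ : S.C} {A : S.Ty Γ} {B : S.Ty (S.ext Γ A)}
    (c : S.Tm Γ (Sg.Sig A B)) (γ : Δ ⟶ Γ) :
    S.tmCast (Sg.Sig_sub A B γ) (S.tmSub c γ) =
      Sg.spair (B := S.tySub B (S.wk γ A)) (S.tmSub (Sg.sfst c) γ)
        (S.tmCast (S.sec_sub_ty γ (Sg.sfst c) B) (S.tmSub (Sg.ssnd c) γ)) := by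
  have h1 := Sg.spair_sub (Sg.sfst c) (Sg.ssnd c) γ
    (S.tmCast (S.sec_sub_ty γ (Sg.sfst c) B) (S.tmSub (Sg.ssnd c) γ))
    (S.tmCast_heq _ _)
  rw [Sg.pair_eta] at h1
  exact eq_of_heq ((S.tmCast_heq _ _).trans h1)

theorem sfst_sub {Δ Γ : S.C} {A : S.Ty Γ} {B : S.Ty (S.ext Γ A)}
    (c : S.Tm Γ (Sg.Sig A B)) (γ : Δ ⟶ Γ) :
    Sg.sfst (S.tmCast (Sg.Sig_sub A B γ) (S.tmSub c γ)) =
      S.tmSub (Sg.sfst c) γ := by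
  rw [S.sub_eq_spair Sg, Sg.fst_pair]

theorem ssnd_sub {Δ Γ : S.C} {A : S.Ty Γ} {B : S.Ty (S.ext Γ A)}
    (c : S.Tm Γ (Sg.Sig A B)) (γ : Δ ⟶ Γ) :
    HEq (Sg.ssnd (S.tmCast (Sg.Sig_sub A B γ) (S.tmSub c γ)))
      (S.tmSub (Sg.ssnd c) γ) := by
  rw [S.sub_eq_spair Sg]
  exact (Sg.snd_pair _ _).trans (S.tmCast_heq _ _)

section SigmaIso

variable {Γ : S.C} (A : S.Ty Γ) (B : S.Ty (S.ext Γ A))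

/-- The canonical term of the substituted Σ-type over `Γ·Σ(A,B)`. -/
def sigC : S.Tm (S.ext Γ (Sg.Sig A B))
    (Sg.Sig (S.tySub A (S.p Γ (Sg.Sig A B)))
      (S.tySub B (S.wk (S.p Γ (Sg.Sig A B)) A))) :=
  S.tmCast (Sg.Sig_sub A B (S.p Γ (Sg.Sig A B))) (S.q Γ (Sg.Sig A B))

/-- First leg of the forward map `Γ·Σ(A,B) ⟶ Γ·A`. -/
def sigSigma : S.ext Γ (Sg.Sig A B) ⟶ S.ext Γ A :=
  S.pair A (S.p Γ (Sg.Sig A B)) (Sg.sfst (S.sigC Sg A B))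

theorem sigSigma_eq : S.sigSigma Sg A B =
    S.sec (Sg.sfst (S.sigC Sg A B)) ≫ S.wk (S.p Γ (Sg.Sig A B)) A :=
  (S.sec_wk _ _ _).symm

/-- The forward map `Γ·Σ(A,B) ⟶ Γ·A·B`. -/
def sigFwd : S.ext Γ (Sg.Sig A B) ⟶ S.ext (S.ext Γ A) B :=
  S.pair B (S.sigSigma Sg A B)
    (S.tmCast (by rw [S.sigSigma_eq, S.tySub_comp]) (Sg.ssnd (S.sigC Sg A B)))

/-- First component used in the backward map. -/
def sigA' : S.Tm (S.ext (S.ext Γ A) B)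
    (S.tySub A (S.p (S.ext Γ A) B ≫ S.p Γ A)) :=
  S.tmCast (S.tySub_comp A (S.p Γ A) (S.p (S.ext Γ A) B)).symm
    (S.tmSub (S.q Γ A) (S.p (S.ext Γ A) B))

theorem p_eq_pair : S.p (S.ext Γ A) B =
    S.pair A (S.p (S.ext Γ A) B ≫ S.p Γ A) (S.sigA' A B) :=
  S.pair_unique _ _ _ _ rfl (S.tmCast_heq _ _).symm

/-- Second component used in the backward map. -/
def sigB' : S.Tm (S.ext (S.ext Γ A) B)
    (S.tySub (S.tySub B (S.wk (S.p (S.ext Γ A) B ≫ S.p Γ A) A))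
      (S.sec (S.sigA' A B))) :=
  S.tmCast (by rw [← S.tySub_comp, S.sec_wk, ← S.p_eq_pair])
    (S.q (S.ext Γ A) B)

/-- The backward map `Γ·A·B ⟶ Γ·Σ(A,B)`. -/
def sigBwd : S.ext (S.ext Γ A) B ⟶ S.ext Γ (Sg.Sig A B) :=
  S.pair (Sg.Sig A B) (S.p (S.ext Γ A) B ≫ S.p Γ A)
    (S.tmCast (Sg.Sig_sub A B _).symm
      (Sg.spair (B := S.tySub B (S.wk (S.p (S.ext Γ A) B ≫ S.p Γ A) A))
        (S.sigA' A B) (S.sigB' A B)))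

theorem fwd_p : S.sigFwd Sg A B ≫ S.p (S.ext Γ A) B = S.sigSigma Sg A B :=
  S.pair_p _ _ _

theorem fwd_q : HEq (S.tmSub (S.q (S.ext Γ A) B) (S.sigFwd Sg A B))
    (Sg.ssnd (S.sigC Sg A B)) :=
  (S.pair_q _ _ _).trans (S.tmCast_heq _ _)

theorem sigSigma_p : S.sigSigma Sg A B ≫ S.p Γ A = S.p Γ (Sg.Sig A B) :=
  S.pair_p _ _ _

theorem sigSigma_q : HEq (S.tmSub (S.q Γ A) (S.sigSigma Sg A B))
    (Sg.sfst (S.sigC Sg A B)) :=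
  S.pair_q _ _ _

theorem bwd_p : S.sigBwd Sg A B ≫ S.p Γ (Sg.Sig A B) =
    S.p (S.ext Γ A) B ≫ S.p Γ A :=
  S.pair_p _ _ _

theorem bwd_q : HEq (S.tmSub (S.q Γ (Sg.Sig A B)) (S.sigBwd Sg A B))
    (Sg.spair (B := S.tySub B (S.wk (S.p (S.ext Γ A) B ≫ S.p Γ A) A))
      (S.sigA' A B) (S.sigB' A B)) :=
  (S.pair_q _ _ _).trans (S.tmCast_heq _ _)

theorem fwd_comp_pp : S.sigFwd Sg A B ≫ (S.p (S.ext Γ A) B ≫ S.p Γ A) =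
    S.p Γ (Sg.Sig A B) := by
  rw [← Category.assoc, S.fwd_p, S.sigSigma_p]

/-- `X`, the substituted canonical term along `sigBwd`, is the Σ-pair. -/
theorem bwd_sigC : HEq
    (S.tmCast (Sg.Sig_sub (S.tySub A (S.p Γ (Sg.Sig A B)))
        (S.tySub B (S.wk (S.p Γ (Sg.Sig A B)) A)) (S.sigBwd Sg A B))
      (S.tmSub (S.sigC Sg A B) (S.sigBwd Sg A B)))
    (Sg.spair (B := S.tySub B (S.wk (S.p (S.ext Γ A) B ≫ S.p Γ A) A))
      (S.sigA' A B) (S.sigB' A B)) :=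
  (S.tmCast_heq _ _).trans
    ((S.tmSub_congr (Sg.Sig_sub A B (S.p Γ (Sg.Sig A B))).symm
      (S.tmCast_heq _ _) (S.sigBwd Sg A B)).trans (S.bwd_q Sg A B))

theorem fwd_bwd : S.sigFwd Sg A B ≫ S.sigBwd Sg A B = 𝟙 _ := by
  apply S.ext_hom_ext
  · rw [Category.assoc, S.bwd_p, S.fwd_comp_pp, Category.id_comp]
  · refine (S.tmSub_comp _ _ _).trans ?_
    refine HEq.trans (S.tmSub_congr
      (by rw [← S.tySub_comp, S.bwd_p, Sg.Sig_sub]) (S.bwd_q Sg A B)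
      (S.sigFwd Sg A B)) ?_
    refine HEq.trans (Sg.spair_sub (S.sigA' A B) (S.sigB' A B)
      (S.sigFwd Sg A B)
      (S.tmCast (S.sec_sub_ty (S.sigFwd Sg A B) (S.sigA' A B) _)
        (S.tmSub (S.sigB' A B) (S.sigFwd Sg A B)))
      (S.tmCast_heq _ _)) ?_
    have ha : HEq (S.tmSub (S.sigA' A B) (S.sigFwd Sg A B))
        (Sg.sfst (S.sigC Sg A B)) := by
      refine HEq.trans (S.tmSub_congr (S.tySub_comp A (S.p Γ A)
        (S.p (S.ext Γ A) B)) (S.tmCast_heq _ _) (S.sigFwd Sg A B)) ?_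
      refine HEq.trans (S.tmSub_comp (S.q Γ A) (S.p (S.ext Γ A) B)
        (S.sigFwd Sg A B)).symm ?_
      rw [S.fwd_p]
      exact S.sigSigma_q Sg A B
    have hb : HEq
        (S.tmCast (S.sec_sub_ty (S.sigFwd Sg A B) (S.sigA' A B) _)
          (S.tmSub (S.sigB' A B) (S.sigFwd Sg A B)))
        (Sg.ssnd (S.sigC Sg A B)) := by
      refine (S.tmCast_heq _ _).trans ?_
      refine HEq.trans (S.tmSub_congr
        (by rw [← S.tySub_comp, S.sec_wk, ← S.p_eq_pair])
        (S.tmCast_heq _ _) (S.sigFwd Sg A B)) ?_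
      exact S.fwd_q Sg A B
    refine HEq.trans (S.spair_congr Sg
      (by rw [← S.tySub_comp, S.fwd_comp_pp])
      (S.tySub_wk_wk (S.sigFwd Sg A B) (S.fwd_comp_pp Sg A B) A B)
      ha hb) ?_
    rw [Sg.pair_eta]
    exact (S.tmCast_heq _ _).trans (S.tmSub_id _).symm

theorem bwd_sigma : S.sigBwd Sg A B ≫ S.sigSigma Sg A B = S.p (S.ext Γ A) B := by
  apply S.ext_hom_ext
  · rw [Category.assoc, S.sigSigma_p, S.bwd_p]
  · refine (S.tmSub_comp _ _ _).trans ?_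
    refine HEq.trans (S.tmSub_congr
      (by rw [← S.tySub_comp, S.sigSigma_p]) (S.sigSigma_q Sg A B)
      (S.sigBwd Sg A B)) ?_
    refine HEq.trans (heq_of_eq (S.sfst_sub Sg (S.sigC Sg A B) (S.sigBwd Sg A B)).symm) ?_
    refine HEq.trans (S.sfst_congr Sg
      (by rw [← S.tySub_comp, S.bwd_p])
      (S.tySub_wk_wk (S.sigBwd Sg A B) (S.bwd_p Sg A B) A B)
      (S.bwd_sigC Sg A B)) ?_
    rw [Sg.fst_pair]
    exact S.tmCast_heq _ _

theorem bwd_fwd : S.sigBwd Sg A B ≫ S.sigFwd Sg A B = 𝟙 _ := by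
  apply S.ext_hom_ext
  · rw [Category.assoc, S.fwd_p, S.bwd_sigma, Category.id_comp]
  · refine (S.tmSub_comp _ _ _).trans ?_
    refine HEq.trans (S.tmSub_congr
      (by rw [← S.tySub_comp, S.fwd_p, S.sigSigma_eq, S.tySub_comp])
      (S.fwd_q Sg A B) (S.sigBwd Sg A B)) ?_
    refine HEq.trans (S.ssnd_sub Sg (S.sigC Sg A B) (S.sigBwd Sg A B)).symm ?_
    refine HEq.trans (S.ssnd_congr Sg
      (by rw [← S.tySub_comp, S.bwd_p])
      (S.tySub_wk_wk (S.sigBwd Sg A B) (S.bwd_p Sg A B) A B)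
      (S.bwd_sigC Sg A B)) ?_
    refine HEq.trans (Sg.snd_pair _ _) ?_
    exact (S.tmCast_heq _ _).trans (S.tmSub_id _).symm

/-- The comprehension of a Σ-type is isomorphic to the iterated
comprehension. -/
def sigIso : S.ext Γ (Sg.Sig A B) ≅ S.ext (S.ext Γ A) B where
  hom := S.sigFwd Sg A B
  inv := S.sigBwd Sg A B
  hom_inv_id := S.fwd_bwd Sg A B
  inv_hom_id := S.bwd_fwd Sg A B

end SigmaIso
end Cwf
namespace Cwf
variable (S : Cwf) (U : UnitTyStructure S)

theorem one_term_heq {Γ : S.C} {A B : S.Ty Γ} (hA : A = U.one Γ)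
    (hB : B = U.one Γ) (x : S.Tm Γ A) (y : S.Tm Γ B) : HEq x y := by
  subst hA; subst hB
  rw [U.star_unique x, U.star_unique y]

/-- The empty context is represented by the unit type. -/
def unitIso : S.unit ≅ S.ext S.unit (U.one S.unit) where
  hom := S.sec (U.star S.unit)
  inv := S.p S.unit (U.one S.unit)
  hom_inv_id := S.sec_p _
  inv_hom_id := by
    apply S.ext_hom_ext
    · rw [Category.assoc, S.sec_p, Category.comp_id, Category.id_comp]
    · exact S.one_term_heq U (by rw [← S.tySub_comp, U.one_sub])
        (by rw [← S.tySub_comp, U.one_sub]) _ _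

end Cwf
/-- a contextual cwf with an `N₁`-structure and a Σ-structure
is democratic (contexts are represented by iterated Σ-types, and the empty
context by `N₁`). -/
theorem contextual_unit_sigma_implies_democratic (S : Cwf)
    (hS : S.Contextual) (U : UnitTyStructure S) (Sg : SigmaStructure S) :
    ∃ bar : S.C → S.Ty S.unit,
      (∀ Γ : S.C, Nonempty (Γ ≅ S.ext S.unit (bar Γ))) ∧
      bar S.unit = U.one S.unit := by
  classical
  obtain ⟨l, hl0, hlsucc⟩ := hS
  have main : ∀ n (Γ : S.C), l Γ = n →
      ∃ A : S.Ty S.unit, Nonempty (Γ ≅ S.ext S.unit A) := by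
    intro n
    induction n with
    | zero =>
      intro Γ h
      rw [(hl0 Γ).mp h]
      exact ⟨U.one S.unit, ⟨S.unitIso U⟩⟩
    | succ n ih =>
      intro Γ h
      obtain ⟨⟨Δ, A⟩, ⟨hΓ, hlΔ⟩, -⟩ := (hlsucc Γ n).mp h
      obtain ⟨D, ⟨φ⟩⟩ := ih Δ hlΔ
      subst hΓ
      refine ⟨Sg.Sig D (S.tySub A φ.inv), ⟨?_⟩⟩
      exact (S.extIso φ (S.tySub A φ.inv) A
        (by rw [← S.tySub_comp, φ.hom_inv_id, S.tySub_id])).trans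
        (S.sigIso Sg D (S.tySub A φ.inv)).symm
  refine ⟨fun Γ => if h : Γ = S.unit then U.one S.unit
    else Classical.choose (main (l Γ) Γ rfl), ?_, by simp⟩
  intro Γ
  by_cases h : Γ = S.unit
  · subst h
    beta_reduce
    rw [dif_pos rfl]
    exact ⟨S.unitIso U⟩
  · beta_reduce
    rw [dif_neg h]
    exact Classical.choose_spec (main (l Γ) Γ rfl)
end
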